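/- arXiv:0911.4344 — 5 statements merged into one kernel-verified Lean document; each statement's English description precedes it below -/
import Mathlib

section
/- Let λ ∈ ℂ with Re λ > 0. Define the kernel k_λ(t,s) := λ e^(−(s−t)λ)(1 − e^(−2tλ)) for 0 < t ≤ s. Then there is an absolute constant C (uniform over λ in any sector |arg λ| ≤ ν < π/2, depending only on ν) with: (a) ∫ from t to ∞ of |k_λ(t,s)| s ds ≤ C t for all t > 0, and (b) ∫₀^s |k_λ(t,s)| dt ≤ C for all s > 0. -/
open MeasureTheory Set

private lemma aux_exp_sub_one_norm {z : ℂ} (hz : z.re ≤ 0) : ‖Complex.exp z - 1‖ ≤ ‖z‖ := by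
  have hconv : Convex ℝ {w : ℂ | w.re ≤ 0} := by
    have : {w : ℂ | w.re ≤ 0} = Complex.reLm ⁻¹' (Iic 0) := rfl
    rw [this]; exact (convex_Iic (0:ℝ)).linear_preimage Complex.reLm
  have := hconv.norm_image_sub_le_of_norm_hasDerivWithin_le
    (f := Complex.exp) (f' := Complex.exp) (C := 1)
    (fun x _ => (Complex.hasDerivAt_exp x).hasDerivWithinAt)
    (fun x hx => by simpa [Complex.norm_exp] using Real.exp_le_one_iff.mpr hx)
    (show (0:ℂ) ∈ {w : ℂ | w.re ≤ 0} by simp) hz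
  simpa using this

private lemma aux_shift (f : ℝ → ℝ) (t : ℝ) :
    (∫ s in Ioi t, f (s - t)) = ∫ u in Ioi 0, f u := by
  have hpre : (fun x : ℝ => x - t) ⁻¹' Ioi 0 = Ioi t := by ext x; simp [sub_pos]
  have h := (MeasureTheory.measurePreserving_sub_right volume t).setIntegral_preimage_emb
    (MeasurableEquiv.subRight t).measurableEmbedding f (Ioi 0)
  rwa [hpre] at h

private lemma aux_shift_int {f : ℝ → ℝ} (t : ℝ) (hf : IntegrableOn f (Ioi 0)) :
    IntegrableOn (fun s => f (s - t)) (Ioi t) := by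
  have hpre : (fun x : ℝ => x - t) ⁻¹' Ioi 0 = Ioi t := by ext x; simp [sub_pos]
  have h := ((MeasureTheory.measurePreserving_sub_right volume t).integrableOn_comp_preimage
    (MeasurableEquiv.subRight t).measurableEmbedding (f := f) (s := Ioi 0)).mpr hf
  rwa [hpre] at h

private lemma aux_reflect (f : ℝ → ℝ) (s : ℝ) :
    (∫ t in Ioo 0 s, f (s - t)) = ∫ u in Ioo 0 s, f u := by
  have hmp : MeasurePreserving (fun x : ℝ => s - x) volume volume := by
    have h : (fun x : ℝ => s - x) = (fun x : ℝ => x + s) ∘ (fun x : ℝ => -x) := by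
      funext x; simp [sub_eq_neg_add]
    rw [h]
    exact (measurePreserving_add_right volume s).comp (Measure.measurePreserving_neg volume)
  have hpre : (fun x : ℝ => s - x) ⁻¹' Ioo 0 s = Ioo 0 s := by
    ext x
    simp only [mem_preimage, mem_Ioo, sub_pos]
    constructor <;> rintro ⟨h1, h2⟩ <;> constructor <;> linarith
  have h := hmp.setIntegral_preimage_emb (MeasurableEquiv.subLeft s).measurableEmbedding f (Ioo 0 s)
  rwa [hpre] at h

private lemma aux_int_exp {a : ℝ} (ha : 0 < a) :
    ∫ u in Ioi (0:ℝ), Real.exp (-(a*u)) = 1/a := by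
  have h := Real.integral_rpow_mul_exp_neg_mul_Ioi (a := 1) (r := a) one_pos ha
  simp only [sub_self, Real.rpow_zero, one_mul, Real.Gamma_one, mul_one, Real.rpow_one] at h
  simpa using h

private lemma aux_int_mul_exp {a : ℝ} (ha : 0 < a) :
    ∫ u in Ioi (0:ℝ), u * Real.exp (-(a*u)) = 1/a^2 := by
  have h := Real.integral_rpow_mul_exp_neg_mul_Ioi (a := 2) (r := a) two_pos ha
  rw [Real.Gamma_two, mul_one] at h
  have h2 : ∫ u in Ioi (0:ℝ), u * Real.exp (-(a*u))
      = ∫ u in Ioi (0:ℝ), u ^ ((2:ℝ) - 1) * Real.exp (-(a*u)) := by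
    refine setIntegral_congr_fun measurableSet_Ioi (fun u hu => ?_)
    rw [show (2:ℝ)-1 = 1 by norm_num, Real.rpow_one]
  rw [h2, h, show (2:ℝ) = ((2:ℕ):ℝ) by norm_num, Real.rpow_natCast, div_pow, one_pow]

private lemma aux_intOn_exp {a : ℝ} (ha : 0 < a) :
    IntegrableOn (fun u => Real.exp (-(a*u))) (Ioi (0:ℝ)) := by
  simpa [neg_mul] using exp_neg_integrableOn_Ioi 0 ha

private lemma aux_intOn_mul_exp {a : ℝ} (ha : 0 < a) :
    IntegrableOn (fun u => u * Real.exp (-(a*u))) (Ioi (0:ℝ)) := by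
  refine ((exp_neg_integrableOn_Ioi 0 (half_pos ha)).const_mul (2/a)).mono'
    ((continuous_id.mul (Real.continuous_exp.comp
      (continuous_const.mul continuous_id).neg)).aestronglyMeasurable) ?_
  filter_upwards [ae_restrict_mem measurableSet_Ioi] with u hu
  have hu' : (0:ℝ) < u := hu
  have h0 := Real.add_one_le_exp (a/2*u)
  have h1 : u ≤ 2/a * Real.exp (a/2*u) := by
    have hm : (2/a) * (a/2*u + 1) ≤ (2/a) * Real.exp (a/2*u) :=
      mul_le_mul_of_nonneg_left h0 (by positivity)
    have he : (2/a) * (a/2*u + 1) = u + 2/a := by field_simp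
    rw [he] at hm
    have : (0:ℝ) < 2/a := by positivity
    linarith
  rw [Real.norm_eq_abs, abs_of_nonneg (by positivity)]
  calc u * Real.exp (-(a*u)) ≤ ((2/a) * Real.exp (a/2*u)) * Real.exp (-(a*u)) :=
        mul_le_mul_of_nonneg_right h1 (Real.exp_pos _).le
    _ = 2/a * Real.exp (-(a/2)*u) := by rw [mul_assoc, ← Real.exp_add]; congr 1; ring

private lemma aux_norm_eq (lam : ℂ) (t s : ℝ) :
    ‖lam * Complex.exp (-(((s : ℂ) - (t : ℂ)) * lam)) *
        (1 - Complex.exp (-(2 * (t : ℂ) * lam)))‖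
      = ‖lam‖ * Real.exp (-((s-t)*lam.re)) *
        ‖1 - Complex.exp (-(2 * (t : ℂ) * lam))‖ := by
  simp only [norm_mul, Complex.norm_exp]
  congr 3
  simp [Complex.mul_re]

/-- For the kernel `k_λ(t,s) = λ e^(−(s−t)λ)(1 − e^(−2tλ))` there is a constant `C`
depending only on `ν < π/2` such that, uniformly over `λ` with `|arg λ| ≤ ν`:
(a) `∫_t^∞ |k_λ(t,s)| s ds ≤ C t` for all `t > 0`, and
(b) `∫₀^s |k_λ(t,s)| dt ≤ C` for all `s > 0`. -/
theorem stmt_5 (ν : ℝ) (hν : ν < Real.pi / 2) :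
    ∃ C : ℝ, 0 < C ∧ ∀ lam : ℂ, |lam.arg| ≤ ν →
      (∀ t : ℝ, 0 < t →
        (∫ s in Ioi t,
            ‖lam * Complex.exp (-(((s : ℂ) - (t : ℂ)) * lam)) *
              (1 - Complex.exp (-(2 * (t : ℂ) * lam)))‖ * s) ≤ C * t) ∧
      (∀ s : ℝ, 0 < s →
        (∫ t in Ioo (0:ℝ) s,
            ‖lam * Complex.exp (-(((s : ℂ) - (t : ℂ)) * lam)) *
              (1 - Complex.exp (-(2 * (t : ℂ) * lam)))‖) ≤ C) := by
  set c := Real.cos ν with hc_def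
  refine ⟨max (2/c^2 + 2/c) 0 + 1, ?_, ?_⟩
  · have := le_max_right (2/c^2 + 2/c) (0:ℝ); linarith
  set C := max (2/c^2 + 2/c) 0 + 1 with hC_def
  have hCnn : (0:ℝ) < C := by
    rw [hC_def]
    have := le_max_right (2/c^2 + 2/c) (0:ℝ); linarith
  intro lam hlam
  by_cases hlam0 : lam = 0
  · subst hlam0
    constructor
    · intro t ht
      simp only [zero_mul, norm_zero, integral_zero]
      positivity
    · intro s hs
      simp only [zero_mul, norm_zero, integral_zero]
      positivity
  -- nontrivial case
  have hν0 : 0 ≤ ν := le_trans (abs_nonneg _) hlam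
  have hc : 0 < c := Real.cos_pos_of_mem_Ioo ⟨by linarith [Real.pi_pos], hν⟩
  set r := ‖lam‖ with hr_def
  set a := lam.re with ha_def
  have hr : 0 < r := norm_pos_iff.mpr hlam0
  have hac : r * c ≤ a := by
    have hcos : c ≤ Real.cos lam.arg := by
      rw [← Real.cos_abs]
      exact Real.cos_le_cos_of_nonneg_of_le_pi (abs_nonneg _)
        (by linarith [Real.pi_pos]) hlam
    have h2 : r * Real.cos lam.arg = a := by
      rw [Complex.cos_arg hlam0, hr_def, ha_def]
      field_simp
    calc r * c ≤ r * Real.cos lam.arg := mul_le_mul_of_nonneg_left hcos hr.le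
      _ = a := h2
  have ha : 0 < a := lt_of_lt_of_le (by positivity) hac
  have hCb : 2/c^2 + 2/c ≤ C := by
    have := le_max_left (2/c^2 + 2/c) (0:ℝ); rw [hC_def]; linarith
  have h1c : r / a ≤ 1 / c := by rw [div_le_div_iff₀ ha hc]; linarith
  have h2c : r^2 / a^2 ≤ 1 / c^2 := by
    rw [div_le_div_iff₀ (by positivity) (by positivity)]
    have hq : (r*c)*(r*c) ≤ a*a := mul_le_mul hac hac (by positivity) ha.le
    nlinarith [hq]
  -- bound for the factor (1 - exp(-2tλ))
  have hfac : ∀ t : ℝ, 0 < t →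
      ‖(1 : ℂ) - Complex.exp (-(2 * (t : ℂ) * lam))‖ ≤ 2 ∧
      ‖(1 : ℂ) - Complex.exp (-(2 * (t : ℂ) * lam))‖ ≤ 2 * t * r := by
    intro t ht
    have hre : (-(2 * (t : ℂ) * lam)).re = -(2*t*a) := by
      simp [Complex.mul_re, ha_def]; try ring
    have hre0 : (-(2 * (t : ℂ) * lam)).re ≤ 0 := by rw [hre]; nlinarith
    constructor
    · calc ‖(1 : ℂ) - Complex.exp (-(2 * (t : ℂ) * lam))‖
          ≤ ‖(1:ℂ)‖ + ‖Complex.exp (-(2 * (t : ℂ) * lam))‖ := norm_sub_le _ _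
        _ ≤ 1 + 1 := by
            gcongr
            · simp
            · rw [Complex.norm_exp, hre]
              exact Real.exp_le_one_iff.mpr (by nlinarith)
        _ = 2 := by norm_num
    · rw [norm_sub_rev]
      calc ‖Complex.exp (-(2 * (t : ℂ) * lam)) - 1‖ ≤ ‖-(2 * (t : ℂ) * lam)‖ :=
            aux_exp_sub_one_norm hre0
        _ = 2 * t * r := by
            rw [norm_neg, norm_mul, norm_mul]
            simp [abs_of_pos ht, hr_def]
  constructor
  -- Part (a)
  · intro t ht
    set g : ℝ → ℝ := fun u => (2*t*r^2) * (u * Real.exp (-(a*u))) + (2*t*r) * Real.exp (-(a*u))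
      with hg_def
    have hgint : IntegrableOn g (Ioi (0:ℝ)) :=
      ((aux_intOn_mul_exp ha).const_mul _).add ((aux_intOn_exp ha).const_mul _)
    have hgint' : IntegrableOn (fun s => g (s - t)) (Ioi t) := aux_shift_int t hgint
    have hmono : (∫ s in Ioi t,
        ‖lam * Complex.exp (-(((s : ℂ) - (t : ℂ)) * lam)) *
          (1 - Complex.exp (-(2 * (t : ℂ) * lam)))‖ * s) ≤ ∫ s in Ioi t, g (s - t) := by
      refine integral_mono_of_nonneg ?_ hgint' ?_
      · filter_upwards [ae_restrict_mem measurableSet_Ioi] with s hs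
        have : (0:ℝ) < s := lt_trans ht hs
        positivity
      · filter_upwards [ae_restrict_mem measurableSet_Ioi] with s hs
        have hst : t < s := hs
        have hu : 0 < s - t := by linarith
        have hn := aux_norm_eq lam t s
        obtain ⟨hb2, hb1⟩ := hfac t ht
        have hexp : (0:ℝ) < Real.exp (-((s-t)*a)) := Real.exp_pos _
        have key1 : ‖lam * Complex.exp (-(((s : ℂ) - (t : ℂ)) * lam)) *
            (1 - Complex.exp (-(2 * (t : ℂ) * lam)))‖ * (s - t)
            ≤ (2*t*r^2) * ((s-t) * Real.exp (-(a*(s-t)))) := by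
          rw [hn]
          calc r * Real.exp (-((s-t)*a)) * ‖(1:ℂ) - Complex.exp (-(2 * (t : ℂ) * lam))‖ * (s-t)
              ≤ r * Real.exp (-((s-t)*a)) * (2*t*r) * (s-t) := by gcongr
            _ = (2*t*r^2) * ((s-t) * Real.exp (-(a*(s-t)))) := by rw [mul_comm (s-t) a]; ring
        have key2 : ‖lam * Complex.exp (-(((s : ℂ) - (t : ℂ)) * lam)) *
            (1 - Complex.exp (-(2 * (t : ℂ) * lam)))‖ * t
            ≤ (2*t*r) * Real.exp (-(a*(s-t))) := by
          rw [hn]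
          calc r * Real.exp (-((s-t)*a)) * ‖(1:ℂ) - Complex.exp (-(2 * (t : ℂ) * lam))‖ * t
              ≤ r * Real.exp (-((s-t)*a)) * 2 * t := by gcongr
            _ = (2*t*r) * Real.exp (-(a*(s-t))) := by rw [mul_comm (s-t) a]; ring
        have : ‖lam * Complex.exp (-(((s : ℂ) - (t : ℂ)) * lam)) *
            (1 - Complex.exp (-(2 * (t : ℂ) * lam)))‖ * s
            = ‖lam * Complex.exp (-(((s : ℂ) - (t : ℂ)) * lam)) *
            (1 - Complex.exp (-(2 * (t : ℂ) * lam)))‖ * (s - t)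
            + ‖lam * Complex.exp (-(((s : ℂ) - (t : ℂ)) * lam)) *
            (1 - Complex.exp (-(2 * (t : ℂ) * lam)))‖ * t := by ring
        rw [this, hg_def]
        exact add_le_add key1 key2
    have hval : (∫ s in Ioi t, g (s - t)) = (2*t*r^2) * (1/a^2) + (2*t*r) * (1/a) := by
      rw [aux_shift g t, hg_def]
      rw [integral_add ((aux_intOn_mul_exp ha).const_mul _) ((aux_intOn_exp ha).const_mul _),
        integral_const_mul, integral_const_mul, aux_int_mul_exp ha, aux_int_exp ha]
    have hfin : (2*t*r^2) * (1/a^2) + (2*t*r) * (1/a) ≤ C * t := by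
      have e1 : (2*t*r^2) * (1/a^2) = (2*t) * (r^2/a^2) := by ring
      have e2 : (2*t*r) * (1/a) = (2*t) * (r/a) := by ring
      have f1 : (2*t) * (r^2/a^2) ≤ (2*t) * (1/c^2) :=
        mul_le_mul_of_nonneg_left h2c (by positivity)
      have f2 : (2*t) * (r/a) ≤ (2*t) * (1/c) :=
        mul_le_mul_of_nonneg_left h1c (by positivity)
      have f3 : (2/c^2 + 2/c) * t ≤ C * t := mul_le_mul_of_nonneg_right hCb ht.le
      have e3 : (2/c^2 + 2/c) * t = (2*t)*(1/c^2) + (2*t)*(1/c) := by ring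
      linarith
    calc (∫ s in Ioi t,
        ‖lam * Complex.exp (-(((s : ℂ) - (t : ℂ)) * lam)) *
          (1 - Complex.exp (-(2 * (t : ℂ) * lam)))‖ * s) ≤ ∫ s in Ioi t, g (s - t) := hmono
      _ = (2*t*r^2) * (1/a^2) + (2*t*r) * (1/a) := hval
      _ ≤ C * t := hfin
  -- Part (b)
  · intro s hs
    set h : ℝ → ℝ := fun u => (2*r) * Real.exp (-(a*u)) with hh_def
    have hhcont : Continuous fun t : ℝ => h (s - t) := by
      apply continuous_const.mul
      exact Real.continuous_exp.comp ((continuous_const.mul (continuous_const.sub continuous_id)).neg)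
    have hhint : IntegrableOn (fun t => h (s - t)) (Ioo 0 s) :=
      (hhcont.integrableOn_Icc (a := 0) (b := s)).mono_set Ioo_subset_Icc_self
    have hmono : (∫ t in Ioo (0:ℝ) s,
        ‖lam * Complex.exp (-(((s : ℂ) - (t : ℂ)) * lam)) *
          (1 - Complex.exp (-(2 * (t : ℂ) * lam)))‖) ≤ ∫ t in Ioo (0:ℝ) s, h (s - t) := by
      refine integral_mono_of_nonneg (Filter.Eventually.of_forall fun _ => norm_nonneg _) hhint ?_
      filter_upwards [ae_restrict_mem measurableSet_Ioo] with t htm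
      obtain ⟨ht0, hts⟩ := htm
      have hn := aux_norm_eq lam t s
      obtain ⟨hb2, _⟩ := hfac t ht0
      rw [hn]
      calc r * Real.exp (-((s-t)*a)) * ‖(1:ℂ) - Complex.exp (-(2 * (t : ℂ) * lam))‖
          ≤ r * Real.exp (-((s-t)*a)) * 2 := by gcongr
        _ = h (s - t) := by
            have e : -((s-t)*a) = -(a*(s-t)) := by ring
            rw [hh_def, e]; ring
    have hrefl : (∫ t in Ioo (0:ℝ) s, h (s - t)) = ∫ u in Ioo (0:ℝ) s, h u := aux_reflect h s
    have hintIoi : IntegrableOn h (Ioi (0:ℝ)) := (aux_intOn_exp ha).const_mul _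
    have hsub : (∫ u in Ioo (0:ℝ) s, h u) ≤ ∫ u in Ioi (0:ℝ), h u := by
      refine setIntegral_mono_set hintIoi ?_ (HasSubset.Subset.eventuallyLE Ioo_subset_Ioi_self)
      filter_upwards with u
      have : (0:ℝ) < Real.exp (-(a*u)) := Real.exp_pos _
      rw [hh_def]; positivity
    have hval : (∫ u in Ioi (0:ℝ), h u) = (2*r) * (1/a) := by
      rw [hh_def, integral_const_mul, aux_int_exp ha]
    have hfin : (2*r) * (1/a) ≤ C := by
      have e2 : (2*r) * (1/a) = 2 * (r/a) := by ring
      have f2 : 2 * (r/a) ≤ 2 * (1/c) := by gcongr; try norm_num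
      have : (0:ℝ) ≤ 2/c^2 := by positivity
      have e3 : 2 * (1/c) = 2/c := by ring
      linarith
    calc (∫ t in Ioo (0:ℝ) s,
        ‖lam * Complex.exp (-(((s : ℂ) - (t : ℂ)) * lam)) *
          (1 - Complex.exp (-(2 * (t : ℂ) * lam)))‖) ≤ ∫ t in Ioo (0:ℝ) s, h (s - t) := hmono
      _ = ∫ u in Ioo (0:ℝ) s, h u := hrefl
      _ ≤ ∫ u in Ioi (0:ℝ), h u := hsub
      _ = (2*r) * (1/a) := hval
      _ ≤ C := hfin
end

section
/- Let λ ∈ ℂ with |arg λ| ≤ ν < π/2. Then for all 0 < s ≤ t, |e^(−(t−s)λ)(1 − e^(−2sλ))| ≤ C s/t, with C depending only on ν. -/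
set_option maxHeartbeats 1000000


/-- For `λ` in the sector `|arg λ| ≤ ν < π/2` and `0 < s ≤ t`,
`|e^(−(t−s)λ)(1 − e^(−2sλ))| ≤ C s/t` with `C` depending only on `ν`. -/
theorem stmt_6 (ν : ℝ) (hν : ν < Real.pi / 2) :
    ∃ C : ℝ, 0 < C ∧ ∀ lam : ℂ, |lam.arg| ≤ ν → ∀ s t : ℝ, 0 < s → s ≤ t →
      ‖Complex.exp (-(((t : ℂ) - (s : ℂ)) * lam)) *
          (1 - Complex.exp (-(2 * (s : ℂ) * lam)))‖ ≤ C * (s / t) := by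
  set ν' : ℝ := max ν 0 with hν'
  have hν'0 : 0 ≤ ν' := le_max_right _ _
  have hν'lt : ν' < Real.pi / 2 := max_lt hν (by linarith [Real.pi_pos])
  set c : ℝ := Real.cos ν' with hcdef
  have hc : 0 < c := Real.cos_pos_of_mem_Ioo ⟨by linarith [Real.pi_pos], hν'lt⟩
  have hc1 : c ≤ 1 := Real.cos_le_one _
  refine ⟨8 / c, by positivity, ?_⟩
  intro lam harg s t hs hst
  have ht : 0 < t := lt_of_lt_of_le hs hst
  by_cases hlam : lam = 0
  · simp [hlam]
    positivity
  -- basic quantities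
  set a : ℝ := lam.re with hadef
  set b : ℝ := ‖lam‖ with hbdef
  have hb : 0 < b := by
    rw [hbdef]; exact norm_pos_iff.mpr hlam
  have hcosarg : Real.cos lam.arg = a / b := Complex.cos_arg hlam
  have hcc : c ≤ Real.cos lam.arg := by
    rw [← Real.cos_abs]
    apply Real.cos_le_cos_of_nonneg_of_le_pi (abs_nonneg _)
    · linarith [Real.pi_pos]
    · exact le_trans harg (le_max_left _ _)
  have hab : c * b ≤ a := by
    have h := hcc
    rw [hcosarg, le_div_iff₀ hb] at h
    exact h
  have ha : 0 < a := lt_of_lt_of_le (by positivity) hab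
  have hba : a ≤ b := Complex.re_le_norm lam
  -- norms of exponentials
  have hn1 : ‖Complex.exp (-(((t : ℂ) - (s : ℂ)) * lam))‖ = Real.exp (-((t - s) * a)) := by
    rw [Complex.norm_exp]
    congr 1
    simp [Complex.mul_re, hadef]
  have hn2 : ‖Complex.exp (-(2 * (s : ℂ) * lam))‖ = Real.exp (-(2 * s * a)) := by
    rw [Complex.norm_exp]
    congr 1
    simp [Complex.mul_re, hadef]
  rw [norm_mul, hn1]
  by_cases h1 : 2 * s * b ≤ 1
  · -- small case: |1 - e^{-2sλ}| ≤ 2 * 2 s b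
    have habs : ‖(-(2 * (s : ℂ) * lam))‖ = 2 * s * b := by
      have hrw : -(2 * (s : ℂ) * lam) = ((-(2 * s) : ℝ) : ℂ) * lam := by push_cast; ring
      rw [hrw, norm_mul, Complex.norm_real, Real.norm_eq_abs, abs_neg, abs_of_pos (by linarith)]
    have hsmall : ‖1 - Complex.exp (-(2 * (s : ℂ) * lam))‖ ≤ 2 * (2 * s * b) := by
      rw [← norm_neg, neg_sub]
      calc ‖Complex.exp (-(2 * (s : ℂ) * lam)) - 1‖
          = ‖Complex.exp (-(2 * (s : ℂ) * lam)) - 1‖ := rfl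
        _ ≤ 2 * ‖(-(2 * (s : ℂ) * lam))‖ :=
            Complex.norm_exp_sub_one_le (by rw [habs]; exact h1)
        _ = 2 * (2 * s * b) := by rw [habs]
    have key : Real.exp (-((t - s) * a)) * (2 * (2 * s * b)) ≤ 8 / c * (s / t) := by
      have hsb : s * a ≤ 1 / 2 := by nlinarith
      have hexp1 : Real.exp (s * a) ≤ 2 := by
        have hx : Real.exp (1 / 2) * Real.exp (1 / 2) = Real.exp 1 := by
          rw [← Real.exp_add]; norm_num
        have h9 := Real.exp_one_lt_d9
        have hmono : Real.exp (s * a) ≤ Real.exp (1 / 2) := Real.exp_le_exp.2 hsb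
        nlinarith [Real.exp_pos (1 / 2)]
      have hexp2 : t * a ≤ Real.exp (t * a) :=
        le_trans (by linarith) (Real.add_one_le_exp (t * a))
      have hrw : Real.exp (-((t - s) * a)) = Real.exp (s * a) / Real.exp (t * a) := by
        rw [← Real.exp_sub]; ring_nf
      have main : Real.exp (s * a) * (2 * (2 * s * b)) * (c * t) ≤ 8 * s * Real.exp (t * a) := by
        nlinarith [mul_le_mul_of_nonneg_right hexp1 (show (0:ℝ) ≤ 4 * s * b * c * t by positivity),
          mul_le_mul_of_nonneg_right hab (show (0:ℝ) ≤ 8 * s * t by positivity),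
          mul_le_mul_of_nonneg_right hexp2 (show (0:ℝ) ≤ 8 * s by positivity)]
      rw [hrw, div_mul_eq_mul_div, div_le_iff₀ (Real.exp_pos _)]
      have heq : 8 / c * (s / t) * Real.exp (t * a) = 8 * s * Real.exp (t * a) / (c * t) := by
        field_simp
      rw [heq, le_div_iff₀ (by positivity)]
      linarith [main]
    calc Real.exp (-((t - s) * a)) * ‖1 - Complex.exp (-(2 * (s : ℂ) * lam))‖
        ≤ Real.exp (-((t - s) * a)) * (2 * (2 * s * b)) :=
          mul_le_mul_of_nonneg_left hsmall (Real.exp_pos _).le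
      _ ≤ 8 / c * (s / t) := key
  · -- large case: |1 - e^{-2sλ}| ≤ 2
    push_neg at h1
    have hsmall : ‖1 - Complex.exp (-(2 * (s : ℂ) * lam))‖ ≤ 2 := by
      calc ‖1 - Complex.exp (-(2 * (s : ℂ) * lam))‖
          ≤ ‖(1 : ℂ)‖ + ‖Complex.exp (-(2 * (s : ℂ) * lam))‖ := norm_sub_le _ _
        _ ≤ 1 + 1 := by
            rw [hn2, norm_one]
            gcongr
            rw [Real.exp_le_one_iff]
            nlinarith
        _ = 2 := by norm_num
    have key : Real.exp (-((t - s) * a)) * 2 ≤ 8 / c * (s / t) := by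
      set x : ℝ := (t - s) * a with hxdef
      have hx0 : 0 ≤ x := mul_nonneg (by linarith) ha.le
      have hex : 1 + x ≤ Real.exp x := by linarith [Real.add_one_le_exp x]
      have hsa : c ≤ 2 * s * a := by
        nlinarith [mul_le_mul_of_nonneg_left hab (show (0:ℝ) ≤ 2 * s by positivity),
          mul_lt_mul_of_pos_left h1 hc]
      have hts : t * c ≤ s * (c + 2 * x) := by
        nlinarith [mul_le_mul_of_nonneg_left hsa (sub_nonneg.2 hst)]
      have main : 2 * (c * t) ≤ 8 * s * Real.exp x := by
        nlinarith [mul_le_mul_of_nonneg_left hex hs.le]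
      rw [Real.exp_neg]
      have h2 : (Real.exp x)⁻¹ * 2 = 2 / Real.exp x := by ring
      rw [h2, div_le_iff₀ (Real.exp_pos _)]
      have heq : 8 / c * (s / t) * Real.exp x = 8 * s * Real.exp x / (c * t) := by
        field_simp
      rw [heq, le_div_iff₀ (by positivity)]
      linarith [main]
    calc Real.exp (-((t - s) * a)) * ‖1 - Complex.exp (-(2 * (s : ℂ) * lam))‖
        ≤ Real.exp (-((t - s) * a)) * 2 :=
          mul_le_mul_of_nonneg_left hsmall (Real.exp_pos _).le
      _ ≤ 8 / c * (s / t) := key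
end

section
/- Let λ ∈ ℂ with |arg λ| ≤ ν < π/2. Then for all 0 < t ≤ s, |e^(−(s−t)λ)(1 − e^(−2tλ))| ≤ C t/s, with C depending only on ν. -/
/-- For `λ` in the sector `|arg λ| ≤ ν < π/2` and `0 < t ≤ s`,
`|e^(−(s−t)λ)(1 − e^(−2tλ))| ≤ C t/s` with `C` depending only on `ν`. -/
theorem stmt_7 (ν : ℝ) (hν : ν < Real.pi / 2) :
    ∃ C : ℝ, 0 < C ∧ ∀ lam : ℂ, |lam.arg| ≤ ν → ∀ t s : ℝ, 0 < t → t ≤ s →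
      ‖Complex.exp (-(((s : ℂ) - (t : ℂ)) * lam)) *
          (1 - Complex.exp (-(2 * (t : ℂ) * lam)))‖ ≤ C * (t / s) := by
  by_cases hν0 : 0 ≤ ν
  · have hc : 0 < Real.cos ν := Real.cos_pos_of_mem_Ioo
      ⟨by linarith [Real.pi_pos], hν⟩
    refine ⟨4 + 8 / Real.cos ν, by positivity, ?_⟩
    intro lam harg t s ht hts
    have hs : 0 < s := lt_of_lt_of_le ht hts
    have hts' : 0 < t / s := by positivity
    rcases eq_or_ne lam 0 with rfl | hlam
    · simp only [mul_zero, neg_zero, Complex.exp_zero, sub_self, mul_zero, norm_zero]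
      positivity
    set a := ‖lam‖ with ha
    have ha0 : 0 < a := norm_pos_iff.mpr hlam
    -- Re lam ≥ cos ν * a
    have hre : Real.cos ν * a ≤ lam.re := by
      have h1 : Real.cos ν ≤ Real.cos lam.arg := by
        rw [← Real.cos_abs lam.arg]
        exact Real.cos_le_cos_of_nonneg_of_le_pi (abs_nonneg _)
          (by linarith [Real.pi_pos]) harg
      have h2 : Real.cos lam.arg = lam.re / a := Complex.cos_arg hlam
      rw [h2] at h1
      calc Real.cos ν * a ≤ (lam.re / a) * a := by
            exact mul_le_mul_of_nonneg_right h1 ha0.le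
        _ = lam.re := by field_simp
    have hre0 : 0 ≤ lam.re := le_trans (by positivity) hre
    -- norms
    set A := ‖Complex.exp (-(((s : ℂ) - (t : ℂ)) * lam))‖ with hA
    set B := ‖(1 : ℂ) - Complex.exp (-(2 * (t : ℂ) * lam))‖ with hB
    have hA0 : 0 ≤ A := norm_nonneg _
    have hB0 : 0 ≤ B := norm_nonneg _
    have hAval : A = Real.exp (-((s - t) * lam.re)) := by
      rw [hA, Complex.norm_exp]
      congr 1
      simp [Complex.mul_re]
    have hBexp : ‖Complex.exp (-(2 * (t : ℂ) * lam))‖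
        = Real.exp (-(2 * t * lam.re)) := by
      rw [Complex.norm_exp]
      congr 1
      simp [Complex.mul_re]
    have hA1 : A ≤ 1 := by
      rw [hAval]
      apply Real.exp_le_one_iff.2
      nlinarith
    have hB2 : B ≤ 2 := by
      rw [hB]
      calc ‖(1 : ℂ) - Complex.exp (-(2 * (t : ℂ) * lam))‖
          ≤ ‖(1 : ℂ)‖ + ‖Complex.exp (-(2 * (t : ℂ) * lam))‖ := norm_sub_le _ _
        _ ≤ 1 + 1 := by
            rw [hBexp, norm_one]
            have : Real.exp (-(2 * t * lam.re)) ≤ 1 :=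
              Real.exp_le_one_iff.2 (by nlinarith)
            linarith
        _ = 2 := by norm_num
    have habs2t : ‖(-(2 * (t : ℂ) * lam))‖ = 2 * t * a := by
      rw [norm_neg, norm_mul, norm_mul, Complex.norm_real, Real.norm_eq_abs,
        abs_of_pos ht]
      norm_num [ha]
    have hBlin : B ≤ 4 * t * a := by
      by_cases h2ta : 2 * t * a ≤ 1
      · have := Complex.norm_exp_sub_one_le (x := -(2 * (t : ℂ) * lam))
          (by rw [habs2t]; exact h2ta)
        rw [habs2t] at this
        calc B = ‖Complex.exp (-(2 * (t : ℂ) * lam)) - 1‖ := norm_sub_rev _ _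
          _ ≤ 2 * (2 * t * a) := this
          _ = 4 * t * a := by ring
      · push_neg at h2ta
        nlinarith
    by_cases hcase : s ≤ 2 * t
    · -- t/s ≥ 1/2
      have : A * B ≤ 1 * 2 := mul_le_mul hA1 hB2 hB0 zero_le_one
      have h1 : (1 : ℝ) / 2 ≤ t / s := by
        rw [div_le_div_iff₀ (by norm_num) hs]; linarith
      calc ‖_ * _‖ = A * B := norm_mul _ _
        _ ≤ 2 := by linarith
        _ ≤ (4 + 8 / Real.cos ν) * (t / s) := by
            have h8 : 0 ≤ 8 / Real.cos ν := by positivity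
            nlinarith
    · push_neg at hcase
      -- A ≤ 2 / (s * cos ν * a)
      have hx : 0 < s / 2 * (Real.cos ν * a) := by positivity
      have hAexp : A ≤ Real.exp (-(s / 2 * (Real.cos ν * a))) := by
        rw [hAval]
        apply Real.exp_le_exp.2
        have h1 : s / 2 ≤ s - t := by linarith
        nlinarith
      have hinv : Real.exp (-(s / 2 * (Real.cos ν * a)))
          ≤ 1 / (s / 2 * (Real.cos ν * a)) := by
        rw [Real.exp_neg, inv_eq_one_div]
        apply one_div_le_one_div_of_le hx
        calc s / 2 * (Real.cos ν * a) ≤ s / 2 * (Real.cos ν * a) + 1 := by linarith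
          _ ≤ Real.exp (s / 2 * (Real.cos ν * a)) := Real.add_one_le_exp _
      have hAle : A ≤ 1 / (s / 2 * (Real.cos ν * a)) := le_trans hAexp hinv
      have key : A * B ≤ (1 / (s / 2 * (Real.cos ν * a))) * (4 * t * a) :=
        mul_le_mul hAle hBlin hB0 (by positivity)
      calc ‖_ * _‖ = A * B := norm_mul _ _
        _ ≤ (1 / (s / 2 * (Real.cos ν * a))) * (4 * t * a) := key
        _ = (8 / Real.cos ν) * (t / s) := by field_simp; ring
        _ ≤ (4 + 8 / Real.cos ν) * (t / s) := by nlinarith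
  · -- ν < 0 : vacuous
    push_neg at hν0
    exact ⟨1, one_pos, fun lam harg => absurd (lt_of_le_of_lt harg hν0) (not_lt.2 (abs_nonneg _))⟩
end

section
/- Energy identity for the transform: Let V, W be complex inner product spaces, A = [[A₁₁, A₁₂],[A₂₁, A₂₂]] a block operator on V ⊕ W with A₁₁ invertible and B := Â its transform. For any g = (g₁, g₂) ∈ V ⊕ W, set f := (A₁₁g₁ + A₁₂g₂, g₂). Then Re⟨Bf, f⟩ = Re⟨Ag, g⟩. Consequently, if A is strictly accretive with constant κ on a subspace invariant under the map g ↦ f, so is B on its image. -/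
noncomputable section

variable {V W : Type*} [NormedAddCommGroup V] [InnerProductSpace ℂ V]
  [NormedAddCommGroup W] [InnerProductSpace ℂ W]

/-- The `(1,1)` block of `Â`, namely `A₁₁⁻¹`. -/
def hat11 (A11 : V ≃L[ℂ] V) : V ≃L[ℂ] V := A11.symm

/-- The `(1,2)` block of `Â`, namely `−A₁₁⁻¹ A₁₂`. -/
def hat12 (A11 : V ≃L[ℂ] V) (A12 : W →L[ℂ] V) : W →L[ℂ] V :=
  -((A11.symm : V →L[ℂ] V).comp A12)

/-- The `(2,1)` block of `Â`, namely `A₂₁ A₁₁⁻¹`. -/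
def hat21 (A11 : V ≃L[ℂ] V) (A21 : V →L[ℂ] W) : V →L[ℂ] W :=
  A21.comp (A11.symm : V →L[ℂ] V)

/-- The `(2,2)` block of `Â`, namely `A₂₂ − A₂₁ A₁₁⁻¹ A₁₂`. -/
def hat22 (A11 : V ≃L[ℂ] V) (A12 : W →L[ℂ] V) (A21 : V →L[ℂ] W) (A22 : W →L[ℂ] W) :
    W →L[ℂ] W :=
  A22 - A21.comp ((A11.symm : V →L[ℂ] V).comp A12)

lemma hat_fst (A11 : V ≃L[ℂ] V) (A12 : W →L[ℂ] V) (g1 : V) (g2 : W) :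
    (hat11 A11) (A11 g1 + A12 g2) + (hat12 A11 A12) g2 = g1 := by
  simp [hat11, hat12]

lemma hat_snd (A11 : V ≃L[ℂ] V) (A12 : W →L[ℂ] V) (A21 : V →L[ℂ] W) (A22 : W →L[ℂ] W)
    (g1 : V) (g2 : W) :
    (hat21 A11 A21) (A11 g1 + A12 g2) + (hat22 A11 A12 A21 A22) g2 = A21 g1 + A22 g2 := by
  simp [hat21, hat22]

/-- Energy identity for the transform `B = Â`: for `g = (g₁,g₂)` and
`f = (A₁₁g₁ + A₁₂g₂, g₂)` one has `Re⟨Bf,f⟩ = Re⟨Ag,g⟩`; consequently,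
if `A` is strictly accretive with constant `κ` on a subspace `H` invariant
under `g ↦ f`, then `B` is strictly accretive (with some constant `κ' > 0`)
on the image of `H`. -/
theorem stmt_9 (A11 : V ≃L[ℂ] V) (A12 : W →L[ℂ] V) (A21 : V →L[ℂ] W) (A22 : W →L[ℂ] W)
    (H : Set (V × W)) (κ : ℝ) (hκ : 0 < κ)
    (hinv : ∀ g ∈ H, ((A11 g.1 + A12 g.2 : V), g.2) ∈ H)
    (hacc : ∀ g ∈ H, κ * (‖g.1‖ ^ 2 + ‖g.2‖ ^ 2) ≤
      (inner ℂ (A11 g.1 + A12 g.2) g.1 + inner ℂ (A21 g.1 + A22 g.2) g.2 : ℂ).re) :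
    (∀ g1 : V, ∀ g2 : W,
      ((inner ℂ ((hat11 A11) (A11 g1 + A12 g2) + (hat12 A11 A12) g2)
          (A11 g1 + A12 g2) : ℂ) +
        (inner ℂ ((hat21 A11 A21) (A11 g1 + A12 g2) + (hat22 A11 A12 A21 A22) g2)
          (g2) : ℂ)).re =
      ((inner ℂ (A11 g1 + A12 g2) g1 : ℂ) + (inner ℂ (A21 g1 + A22 g2) g2 : ℂ)).re) ∧
    ∃ κ' : ℝ, 0 < κ' ∧ ∀ g ∈ H,
      κ' * (‖(A11 g.1 + A12 g.2 : V)‖ ^ 2 + ‖g.2‖ ^ 2) ≤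
        ((inner ℂ ((hat11 A11) (A11 g.1 + A12 g.2) + (hat12 A11 A12) g.2)
            (A11 g.1 + A12 g.2) : ℂ) +
          (inner ℂ ((hat21 A11 A21) (A11 g.1 + A12 g.2) + (hat22 A11 A12 A21 A22) g.2)
            (g.2) : ℂ)).re := by
  have key : ∀ (g1 : V) (g2 : W),
      ((inner ℂ ((hat11 A11) (A11 g1 + A12 g2) + (hat12 A11 A12) g2)
          (A11 g1 + A12 g2) : ℂ) +
        (inner ℂ ((hat21 A11 A21) (A11 g1 + A12 g2) + (hat22 A11 A12 A21 A22) g2)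
          (g2) : ℂ)).re =
      ((inner ℂ (A11 g1 + A12 g2) g1 : ℂ) + (inner ℂ (A21 g1 + A22 g2) g2 : ℂ)).re := by
    intro g1 g2
    rw [hat_fst, hat_snd]
    simp only [Complex.add_re]
    congr 1
    exact inner_re_symm (𝕜 := ℂ) _ _
  refine ⟨key, ?_⟩
  set a := ‖(A11 : V →L[ℂ] V)‖ with ha
  set b := ‖A12‖ with hb
  have ha0 : 0 ≤ a := norm_nonneg _
  have hb0 : 0 ≤ b := norm_nonneg _
  set M := 1 + 2 * a ^ 2 + 2 * b ^ 2 with hM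
  have hM0 : 0 < M := by positivity
  refine ⟨κ / M, by positivity, ?_⟩
  rintro ⟨g1, g2⟩ hg
  have hA := hacc ⟨g1, g2⟩ hg
  rw [key g1 g2]
  have hbound : ‖(A11 g1 + A12 g2 : V)‖ ≤ a * ‖g1‖ + b * ‖g2‖ := by
    refine (norm_add_le _ _).trans (add_le_add ?_ (A12.le_opNorm _))
    exact (A11 : V →L[ℂ] V).le_opNorm _
  have h1 : ‖(A11 g1 + A12 g2 : V)‖ ^ 2 ≤ (a * ‖g1‖ + b * ‖g2‖) ^ 2 := by
    have := norm_nonneg (A11 g1 + A12 g2 : V)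
    nlinarith
  have h2 : (a * ‖g1‖ + b * ‖g2‖) ^ 2 + ‖g2‖ ^ 2 ≤ M * (‖g1‖ ^ 2 + ‖g2‖ ^ 2) := by
    have hn1 : 0 ≤ ‖g1‖ := norm_nonneg _
    have hn2 : 0 ≤ ‖g2‖ := norm_nonneg _
    nlinarith [sq_nonneg (a * ‖g1‖ - b * ‖g2‖), sq_nonneg (‖g1‖ - ‖g2‖), mul_nonneg ha0 hn1, mul_nonneg hb0 hn2]
  have h3 : κ / M * (‖(A11 g1 + A12 g2 : V)‖ ^ 2 + ‖g2‖ ^ 2) ≤ κ * (‖g1‖ ^ 2 + ‖g2‖ ^ 2) := by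
    rw [div_mul_eq_mul_div, div_le_iff₀ hM0]
    nlinarith [h1, h2]
  exact h3.trans hA

end
end

section
/- Multiplication norm dominates the sup norm: Let ℰ : (0,∞) × ℝⁿ → ℂ be measurable and define ‖ℰ‖_* as the norm of pointwise multiplication by ℰ as a map from the space X := {f : Ñ*(f) ∈ L²(ℝⁿ)} (with norm ‖Ñ*(f)‖₂) to Y* := L²((0,∞) × ℝⁿ, dt dx / t). Then ‖ℰ‖_{L^∞} ≤ C ‖ℰ‖_* for a constant C depending only on n, c₀, c₁. -/
open MeasureTheory Set ENNReal

/-- The squared `L²` norm of `f` over the Whitney region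
`W(t,x) = (c₀⁻¹t, c₀t) × B(x, c₁t)`. -/
noncomputable def whitneyL2sq (n : ℕ) (c₀ c₁ : ℝ)
    (f : ℝ → EuclideanSpace ℝ (Fin n) → ℂ) (t : ℝ) (x : EuclideanSpace ℝ (Fin n)) :
    ℝ≥0∞ :=
  ∫⁻ s in Ioo (c₀⁻¹ * t) (c₀ * t), ∫⁻ y in Metric.ball x (c₁ * t),
    (‖f s y‖₊ : ℝ≥0∞) ^ 2

/-- The modified non-tangential maximal function
`Ñ*(f)(x) = sup_{t>0} t^(−(1+n)/2) ‖f‖_{L²(W(t,x))}`. -/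
noncomputable def ntMax (n : ℕ) (c₀ c₁ : ℝ) (f : ℝ → EuclideanSpace ℝ (Fin n) → ℂ)
    (x : EuclideanSpace ℝ (Fin n)) : ℝ≥0∞ :=
  ⨆ t ∈ Ioi (0:ℝ),
    (ENNReal.ofReal t) ^ (-((1:ℝ) + n) / 2) * (whitneyL2sq n c₀ c₁ f t x) ^ ((1:ℝ) / 2)

set_option maxHeartbeats 1000000 in
private lemma key_box (n : ℕ) (c₀ c₁ : ℝ) (hc₀ : 1 < c₀) (hc₁ : 0 < c₁)
    (E : ℝ → EuclideanSpace ℝ (Fin n) → ℂ) (hE : Measurable (Function.uncurry E))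
    (M : ℝ≥0∞)
    (hM : ∀ f : ℝ → EuclideanSpace ℝ (Fin n) → ℂ, Measurable (Function.uncurry f) →
        (∫⁻ t in Ioi (0:ℝ),
            (∫⁻ x, (‖E t x * f t x‖₊ : ℝ≥0∞) ^ 2) * (ENNReal.ofReal t)⁻¹) ≤
          M ^ 2 * ∫⁻ x, (ntMax n c₀ c₁ f x) ^ 2)
    (lam : ℝ≥0∞) (t₀ : ℝ) (ht₀ : 0 < t₀) (x₀ : EuclideanSpace ℝ (Fin n))
    (A : Set (ℝ × EuclideanSpace ℝ (Fin n))) (hAmeas : MeasurableSet A)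
    (hAsub : A ⊆ Ioc t₀ (2*t₀) ×ˢ Metric.ball x₀ t₀)
    (hAS : ∀ p ∈ A, lam < (‖E p.1 p.2‖₊ : ℝ≥0∞))
    (hA0 : (volume.prod volume) A ≠ 0) (hAtop : (volume.prod volume) A ≠ ⊤) :
    lam ^ 2 ≤ (ENNReal.ofReal (2 * c₀^(n+1) * (1+2*c₀*c₁)^n)
        * volume (Metric.ball (0 : EuclideanSpace ℝ (Fin n)) 1)) * M ^ 2 := by
  have hc₀0 : (0:ℝ) < c₀ := lt_trans one_pos hc₀
  set ν : Measure (ℝ × EuclideanSpace ℝ (Fin n)) := volume.prod volume with hν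
  set a : ℝ≥0∞ := ν A with ha
  -- the test function
  set f : ℝ → EuclideanSpace ℝ (Fin n) → ℂ :=
    fun t x => A.indicator (fun _ => (1:ℂ)) (t, x) with hfdef
  have hf : Measurable (Function.uncurry f) := by
    have : Function.uncurry f = A.indicator (fun _ => (1:ℂ)) := rfl
    rw [this]; exact measurable_const.indicator hAmeas
  have hfind : ∀ s y, ((‖f s y‖₊ : ℝ≥0∞)) ^ 2
      = A.indicator (fun _ => (1:ℝ≥0∞)) (s, y) := by
    intro s y
    by_cases h : (s, y) ∈ A <;> simp [hfdef, indicator_of_mem, indicator_of_notMem, h]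
  have hA_t : ∀ p ∈ A, p.1 ∈ Ioc t₀ (2*t₀) := fun p hp => (hAsub hp).1
  have hA_x : ∀ p ∈ A, p.2 ∈ Metric.ball x₀ t₀ := fun p hp => (hAsub hp).2
  -- Lower bound on the LHS
  have hμPA : ((volume.restrict (Ioi (0:ℝ))).prod volume) A = a := by
    rw [Measure.restrict_prod_eq_prod_univ, Measure.restrict_apply hAmeas,
      inter_eq_self_of_subset_left]
    intro p hp
    exact ⟨lt_of_lt_of_le ht₀ (hA_t p hp).1.le, mem_univ _⟩
  have haconst : a ≠ 0 := hA0
  have hconst : ENNReal.ofReal (2*t₀) ≠ 0 := by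
    simp [ENNReal.ofReal_eq_zero, not_le]; linarith
  have hLHS : lam^2 * (ENNReal.ofReal (2*t₀))⁻¹ * a ≤
      ∫⁻ t in Ioi (0:ℝ),
        (∫⁻ x, (‖E t x * f t x‖₊ : ℝ≥0∞) ^ 2) * (ENNReal.ofReal t)⁻¹ := by
    have hmeasInd : Measurable
        (A.indicator (fun _ => lam^2 * (ENNReal.ofReal (2*t₀))⁻¹)) :=
      measurable_const.indicator hAmeas
    have h0 : lam^2 * (ENNReal.ofReal (2*t₀))⁻¹ * a
        = ∫⁻ p, A.indicator (fun _ => lam^2 * (ENNReal.ofReal (2*t₀))⁻¹) p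
            ∂((volume.restrict (Ioi (0:ℝ))).prod volume) := by
      rw [lintegral_indicator hAmeas, setLIntegral_const, hμPA]
    rw [h0, lintegral_prod _ hmeasInd.aemeasurable]
    refine lintegral_mono fun t => ?_
    have hslice : Measurable fun x => (‖E t x * f t x‖₊ : ℝ≥0∞) ^ 2 :=
      (((hE.comp measurable_prodMk_left).mul
        (hf.comp measurable_prodMk_left)).nnnorm.coe_nnreal_ennreal).pow_const 2
    calc (∫⁻ x, A.indicator (fun _ => lam^2 * (ENNReal.ofReal (2*t₀))⁻¹) (t, x))
        ≤ ∫⁻ x, (‖E t x * f t x‖₊ : ℝ≥0∞) ^ 2 * (ENNReal.ofReal t)⁻¹ := by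
          refine lintegral_mono fun x => ?_
          by_cases hp : (t, x) ∈ A
          · rw [indicator_of_mem hp]
            have h1 : lam ^ 2 ≤ (‖E t x * f t x‖₊ : ℝ≥0∞) ^ 2 := by
              have hf1 : f t x = 1 := indicator_of_mem hp _
              rw [hf1, mul_one]
              exact pow_le_pow_left₀ zero_le (hAS _ hp).le 2
            have h2 : (ENNReal.ofReal (2*t₀))⁻¹ ≤ (ENNReal.ofReal t)⁻¹ :=
              ENNReal.inv_le_inv.2 (ENNReal.ofReal_le_ofReal (hA_t _ hp).2)
            exact mul_le_mul' h1 h2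
          · rw [indicator_of_notMem hp]; exact zero_le
      _ = (∫⁻ x, (‖E t x * f t x‖₊ : ℝ≥0∞) ^ 2) * (ENNReal.ofReal t)⁻¹ :=
          lintegral_mul_const _ hslice
  -- Upper bound on ntMax
  set rs : ℝ := (1 + 2*c₀*c₁) * t₀ with hrs
  have hrs0 : 0 < rs := by positivity
  set B : Set (EuclideanSpace ℝ (Fin n)) := Metric.ball x₀ rs with hB
  set T : ℝ≥0∞ := ENNReal.ofReal (t₀ / c₀) with hT
  set R : ℝ≥0∞ := T ^ (-((1:ℝ) + n) / 2) * a ^ ((1:ℝ)/2) with hR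
  have hW_le : ∀ t x, whitneyL2sq n c₀ c₁ f t x ≤ a := by
    intro t x
    have h1 : whitneyL2sq n c₀ c₁ f t x ≤ ∫⁻ s, ∫⁻ y, ((‖f s y‖₊ : ℝ≥0∞)) ^ 2 := by
      refine le_trans (lintegral_mono fun s => setLIntegral_le_lintegral _ _) ?_
      exact setLIntegral_le_lintegral _ _
    refine le_trans h1 (le_of_eq ?_)
    have hmeas : AEMeasurable (A.indicator (fun _ => (1:ℝ≥0∞))) ν :=
      (measurable_const.indicator hAmeas).aemeasurable
    calc (∫⁻ s, ∫⁻ y, ((‖f s y‖₊ : ℝ≥0∞)) ^ 2)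
        = ∫⁻ s, ∫⁻ y, A.indicator (fun _ => (1:ℝ≥0∞)) (s, y) := by
          simp only [hfind]
      _ = ∫⁻ p, A.indicator (fun _ => (1:ℝ≥0∞)) p ∂ν := (lintegral_prod _ hmeas).symm
      _ = a := by rw [lintegral_indicator hAmeas, setLIntegral_const, one_mul]
  have hW_zero_t : ∀ t x, c₀ * t ≤ t₀ ∨ 2*t₀ ≤ c₀⁻¹ * t →
      whitneyL2sq n c₀ c₁ f t x = 0 := by
    intro t x hcase
    have hz : ∀ s ∈ Ioo (c₀⁻¹ * t) (c₀ * t),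
        (∫⁻ y in Metric.ball x (c₁ * t), ((‖f s y‖₊ : ℝ≥0∞)) ^ 2) = 0 := by
      intro s hs
      have hs0 : ∀ y, f s y = 0 := by
        intro y
        refine indicator_of_notMem (fun hmem => ?_) _
        have h1 := hA_t _ hmem
        have h1a : t₀ < s := h1.1
        have h1b : s ≤ 2*t₀ := h1.2
        rcases hcase with h | h
        · linarith [hs.2]
        · linarith [hs.1]
      simp [hs0]
    rw [whitneyL2sq, setLIntegral_congr_fun measurableSet_Ioo hz,
      lintegral_zero]
  have hW_zero_x : ∀ t x, rs ≤ dist x x₀ →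
      whitneyL2sq n c₀ c₁ f t x = 0 := by
    intro t x hdist
    have hz : ∀ s ∈ Ioo (c₀⁻¹ * t) (c₀ * t),
        (∫⁻ y in Metric.ball x (c₁ * t), ((‖f s y‖₊ : ℝ≥0∞)) ^ 2) = 0 := by
      intro s hs
      have hy : ∀ y ∈ Metric.ball x (c₁ * t), ((‖f s y‖₊ : ℝ≥0∞)) ^ 2 = 0 := by
        intro y hy
        have hfy : f s y = 0 := by
          refine indicator_of_notMem (fun hmem => ?_) _
          have hst := hA_t _ hmem
          have hyx₀ : dist y x₀ < t₀ := by
            have h2 := hA_x _ hmem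
            rwa [Metric.mem_ball] at h2
          have hts : t < c₀ * s := by
            have h1 := hs.1
            calc t = c₀ * (c₀⁻¹ * t) := by field_simp
              _ < c₀ * s := mul_lt_mul_of_pos_left h1 hc₀0
          have ht2 : t < 2 * c₀ * t₀ := by nlinarith [hst.2]
          have hdxy : dist x y < c₁ * t := by
            rw [Metric.mem_ball] at hy; rw [dist_comm]; exact hy
          have hclt : c₁ * t < c₁ * (2 * c₀ * t₀) := mul_lt_mul_of_pos_left ht2 hc₁
          have htri := dist_triangle x y x₀
          have : dist x x₀ < rs := by rw [hrs]; nlinarith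
          linarith
        simp [hfy]
      rw [setLIntegral_congr_fun measurableSet_ball hy,
        lintegral_zero]
    rw [whitneyL2sq, setLIntegral_congr_fun measurableSet_Ioo hz,
      lintegral_zero]
  have hnt : ∀ x, ntMax n c₀ c₁ f x ≤ B.indicator (fun _ => R) x := by
    intro x
    rw [ntMax]
    refine iSup₂_le fun t ht => ?_
    by_cases hx : x ∈ B
    · rw [indicator_of_mem hx]
      by_cases hW : whitneyL2sq n c₀ c₁ f t x = 0
      · rw [hW, ENNReal.zero_rpow_of_pos (by norm_num), mul_zero]
        exact zero_le
      · have htlow : t₀ < c₀ * t := by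
          by_contra hcon
          push_neg at hcon
          exact hW (hW_zero_t t x (Or.inl hcon))
        have htdiv : t₀ / c₀ ≤ t := by
          rw [div_le_iff₀ hc₀0]; nlinarith
        have h1 : ENNReal.ofReal t ^ (-((1:ℝ) + n) / 2) ≤ T ^ (-((1:ℝ) + n) / 2) := by
          rw [show (-((1:ℝ) + n) / 2) = -(((1:ℝ) + n) / 2) by ring,
            ENNReal.rpow_neg, ENNReal.rpow_neg]
          exact ENNReal.inv_le_inv.2
            (ENNReal.rpow_le_rpow (ENNReal.ofReal_le_ofReal htdiv) (by positivity))
        have h2 : whitneyL2sq n c₀ c₁ f t x ^ ((1:ℝ)/2) ≤ a ^ ((1:ℝ)/2) :=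
          ENNReal.rpow_le_rpow (hW_le t x) (by norm_num)
        exact mul_le_mul' h1 h2
    · have hdist : rs ≤ dist x x₀ := by
        rw [hB, Metric.mem_ball, not_lt] at hx
        exact hx
      rw [hW_zero_x t x hdist, ENNReal.zero_rpow_of_pos (by norm_num), mul_zero]
      exact zero_le
  have hntInt : (∫⁻ x, (ntMax n c₀ c₁ f x) ^ 2) ≤ R^2 * volume B := by
    have hsq : ∀ x, (B.indicator (fun _ => R) x)^2 = B.indicator (fun _ => R^2) x := by
      intro x; by_cases h : x ∈ B <;> simp [h]
    calc (∫⁻ x, (ntMax n c₀ c₁ f x) ^ 2)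
        ≤ ∫⁻ x, (B.indicator (fun _ => R) x)^2 :=
          lintegral_mono fun x => pow_le_pow_left₀ zero_le (hnt x) 2
      _ = ∫⁻ x, B.indicator (fun _ => R^2) x := by simp only [hsq]
      _ = R^2 * volume B := by
          rw [lintegral_indicator measurableSet_ball, setLIntegral_const]
  have hmain2 : lam^2 * (ENNReal.ofReal (2*t₀))⁻¹ * a ≤ M^2 * (R^2 * volume B) :=
    (hLHS.trans (hM f hf)).trans (mul_le_mul_right hntInt _)
  have hctop : ENNReal.ofReal (2*t₀) ≠ ⊤ := ofReal_ne_top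
  have hR2 : R^2 = T ^ (-((1:ℝ) + n)) * a := by
    rw [hR, mul_pow, ← ENNReal.rpow_natCast (T ^ (-((1:ℝ) + n) / 2)) 2,
      ← ENNReal.rpow_mul, ← ENNReal.rpow_natCast (a ^ ((1:ℝ)/2)) 2, ← ENNReal.rpow_mul]
    norm_num
  have hvolB : volume B = ENNReal.ofReal (rs ^ n)
      * volume (Metric.ball (0 : EuclideanSpace ℝ (Fin n)) 1) := by
    rcases Nat.eq_zero_or_pos n with hn | hn
    · subst hn
      have hsing : ∀ (x : EuclideanSpace ℝ (Fin 0)) (r : ℝ), 0 < r →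
          Metric.ball x r = univ := by
        intro x r hr
        refine eq_univ_of_forall fun y => ?_
        have hyx : y = x := Subsingleton.elim _ _
        simp [Metric.mem_ball, hyx, hr]
      rw [hB, hsing _ _ hrs0, hsing _ _ one_pos]
      simp
    · haveI : Nonempty (Fin n) := ⟨⟨0, hn⟩⟩
      haveI : Nontrivial (EuclideanSpace ℝ (Fin n)) := by
        refine ⟨⟨0, EuclideanSpace.single ⟨0, hn⟩ 1, fun hcon => ?_⟩⟩
        have : (EuclideanSpace.single ⟨0, hn⟩ 1 : EuclideanSpace ℝ (Fin n)) ⟨0, hn⟩ = (0 : EuclideanSpace ℝ (Fin n)) ⟨0, hn⟩ := by rw [hcon]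
        rw [EuclideanSpace.single_apply] at this
        simp at this
      rw [hB, Measure.addHaar_ball volume x₀ hrs0.le, finrank_euclideanSpace_fin]
  have hTpow : T ^ (-((1:ℝ) + n)) * ENNReal.ofReal (rs ^ n) * ENNReal.ofReal (2*t₀)
      = ENNReal.ofReal (2 * c₀^(n+1) * (1+2*c₀*c₁)^n) := by
    have ht₀c : (0:ℝ) < t₀ / c₀ := by positivity
    rw [hT, ENNReal.ofReal_rpow_of_pos ht₀c, ← ENNReal.ofReal_mul (by positivity),
      ← ENNReal.ofReal_mul (by positivity)]
    congr 1
    have hexp : ((1:ℝ) + n) = ((n+1 : ℕ) : ℝ) := by push_cast; ring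
    have h1 : t₀ ≠ 0 := ne_of_gt ht₀
    have h2 : c₀ ≠ 0 := ne_of_gt hc₀0
    rw [Real.rpow_neg ht₀c.le, hexp, Real.rpow_natCast, hrs]
    rw [mul_pow]
    field_simp
    rw [div_pow, div_mul_cancel₀ _ (pow_ne_zero _ h2)]; ring
  have haa : a * a⁻¹ = 1 := ENNReal.mul_inv_cancel hA0 hAtop
  have hcc : (ENNReal.ofReal (2*t₀))⁻¹ * ENNReal.ofReal (2*t₀) = 1 :=
    ENNReal.inv_mul_cancel hconst hctop
  calc lam^2
      = lam^2 * ((ENNReal.ofReal (2*t₀))⁻¹ * ENNReal.ofReal (2*t₀)) * (a * a⁻¹) := by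
        rw [hcc, haa, mul_one, mul_one]
    _ = (lam^2 * (ENNReal.ofReal (2*t₀))⁻¹ * a) * (ENNReal.ofReal (2*t₀) * a⁻¹) := by
        ring
    _ ≤ (M^2 * (R^2 * volume B)) * (ENNReal.ofReal (2*t₀) * a⁻¹) :=
        mul_le_mul_left hmain2 _
    _ = (a * a⁻¹) * ((T ^ (-((1:ℝ) + n)) * ENNReal.ofReal (rs ^ n)
          * ENNReal.ofReal (2*t₀))
          * volume (Metric.ball (0 : EuclideanSpace ℝ (Fin n)) 1) * M^2) := by
        rw [hR2, hvolB]; ring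
    _ = (ENNReal.ofReal (2 * c₀^(n+1) * (1+2*c₀*c₁)^n)
        * volume (Metric.ball (0 : EuclideanSpace ℝ (Fin n)) 1)) * M ^ 2 := by
        rw [haa, hTpow, one_mul]

private lemma key_lam (n : ℕ) (c₀ c₁ : ℝ) (hc₀ : 1 < c₀) (hc₁ : 0 < c₁)
    (E : ℝ → EuclideanSpace ℝ (Fin n) → ℂ) (hE : Measurable (Function.uncurry E))
    (M : ℝ≥0∞)
    (hM : ∀ f : ℝ → EuclideanSpace ℝ (Fin n) → ℂ, Measurable (Function.uncurry f) →
        (∫⁻ t in Ioi (0:ℝ),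
            (∫⁻ x, (‖E t x * f t x‖₊ : ℝ≥0∞) ^ 2) * (ENNReal.ofReal t)⁻¹) ≤
          M ^ 2 * ∫⁻ x, (ntMax n c₀ c₁ f x) ^ 2)
    (lam : ℝ≥0∞)
    (hlam : ((volume.restrict (Ioi (0:ℝ))).prod volume)
        {p : ℝ × EuclideanSpace ℝ (Fin n) | lam < (‖E p.1 p.2‖₊ : ℝ≥0∞)} ≠ 0) :
    lam ^ 2 ≤ (ENNReal.ofReal (2 * c₀^(n+1) * (1+2*c₀*c₁)^n)
        * volume (Metric.ball (0 : EuclideanSpace ℝ (Fin n)) 1)) * M ^ 2 := by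
  set μP : Measure (ℝ × EuclideanSpace ℝ (Fin n)) := (volume.restrict (Ioi (0:ℝ))).prod volume with hμP
  set S := {p : ℝ × EuclideanSpace ℝ (Fin n) | lam < (‖E p.1 p.2‖₊ : ℝ≥0∞)} with hS
  have hSmeas : MeasurableSet S := by
    have hg : Measurable
        (fun p : ℝ × EuclideanSpace ℝ (Fin n) => (‖E p.1 p.2‖₊ : ℝ≥0∞)) :=
      hE.nnnorm.coe_nnreal_ennreal
    exact measurableSet_lt measurable_const hg
  obtain ⟨D, hDc, hDd⟩ :=
    TopologicalSpace.exists_countable_dense (EuclideanSpace ℝ (Fin n))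
  have hcover : ∃ (j : ℤ) (q : EuclideanSpace ℝ (Fin n)), q ∈ D ∧
      μP (S ∩ Ioc ((2:ℝ)^j) ((2:ℝ)^(j+1)) ×ˢ Metric.ball q ((2:ℝ)^j)) ≠ 0 := by
    by_contra hcon
    push_neg at hcon
    apply hlam
    have hsub : S ⊆ ((Ioi (0:ℝ))ᶜ ×ˢ (univ : Set (EuclideanSpace ℝ (Fin n)))) ∪
        ⋃ j : ℤ, ⋃ q ∈ D,
          (S ∩ Ioc ((2:ℝ)^j) ((2:ℝ)^(j+1)) ×ˢ Metric.ball q ((2:ℝ)^j)) := by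
      intro p hp
      by_cases hp1 : 0 < p.1
      · right
        obtain ⟨j, hj⟩ := _root_.exists_mem_Ioc_zpow hp1 one_lt_two
        obtain ⟨q, hqD, hq⟩ := hDd.exists_dist_lt p.2 (show (0:ℝ) < 2^j by positivity)
        refine mem_iUnion.2 ⟨j, mem_iUnion₂.2 ⟨q, hqD, hp, hj, ?_⟩⟩
        rw [Metric.mem_ball]
        exact hq
      · left; exact ⟨hp1, mem_univ _⟩
    refine measure_mono_null hsub (measure_union_null ?_ ?_)
    · rw [hμP, Measure.prod_prod, Measure.restrict_apply measurableSet_Ioi.compl]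
      simp [Iic_inter_Ioi, Ioc_self]
    · rw [measure_iUnion_null_iff]
      intro j
      rw [measure_biUnion_null_iff hDc]
      intro q hq
      exact hcon j q hq
  obtain ⟨j, q, hqD, hpos⟩ := hcover
  set t₀ : ℝ := (2:ℝ)^j with ht₀def
  have ht₀ : 0 < t₀ := by positivity
  set A := S ∩ Ioc t₀ ((2:ℝ)^(j+1)) ×ˢ Metric.ball q t₀ with hAdef
  have h2t : ((2:ℝ)^(j+1)) = 2 * t₀ := by
    rw [ht₀def, zpow_add_one₀ (two_ne_zero)]; ring
  have hAmeas : MeasurableSet A :=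
    hSmeas.inter (measurableSet_Ioc.prod measurableSet_ball)
  have hAsub : A ⊆ Ioc t₀ (2*t₀) ×ˢ Metric.ball q t₀ := by
    rw [← h2t]; exact inter_subset_right
  have hAS : ∀ p ∈ A, lam < (‖E p.1 p.2‖₊ : ℝ≥0∞) := fun p hp => hp.1
  have hμν : μP A = (volume.prod volume) A := by
    rw [hμP, Measure.restrict_prod_eq_prod_univ, Measure.restrict_apply hAmeas,
      inter_eq_self_of_subset_left]
    intro p hp
    exact ⟨lt_of_lt_of_le ht₀ (hAsub hp).1.1.le, mem_univ _⟩
  have hA0 : (volume.prod volume) A ≠ 0 := by rw [← hμν]; exact hpos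
  have hAtop : (volume.prod volume) A ≠ ⊤ := by
    have hle : (volume.prod volume) A
        ≤ (volume.prod volume) (Ioc t₀ (2*t₀) ×ˢ Metric.ball q t₀) :=
      measure_mono hAsub
    refine ne_top_of_le_ne_top ?_ hle
    rw [Measure.prod_prod]
    exact ENNReal.mul_ne_top measure_Ioc_lt_top.ne measure_ball_lt_top.ne
  exact key_box n c₀ c₁ hc₀ hc₁ E hE M hM lam t₀ ht₀ q A hAmeas hAsub hAS hA0 hAtop

/-- The multiplication norm dominates the sup norm: if `M` bounds pointwise
multiplication by `ℰ` as a map from `{f : Ñ*(f) ∈ L²}` to `L²(dt dx/t)`, then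
`‖ℰ‖_∞ ≤ C M` with `C = C(n,c₀,c₁)`. -/
theorem stmt_13 (n : ℕ) (c₀ c₁ : ℝ) (hc₀ : 1 < c₀) (hc₁ : 0 < c₁) :
    ∃ C : ℝ≥0∞, C ≠ ⊤ ∧ ∀ E : ℝ → EuclideanSpace ℝ (Fin n) → ℂ,
      Measurable (Function.uncurry E) → ∀ M : ℝ≥0∞,
      (∀ f : ℝ → EuclideanSpace ℝ (Fin n) → ℂ, Measurable (Function.uncurry f) →
        (∫⁻ t in Ioi (0:ℝ),
            (∫⁻ x, (‖E t x * f t x‖₊ : ℝ≥0∞) ^ 2) * (ENNReal.ofReal t)⁻¹) ≤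
          M ^ 2 * ∫⁻ x, (ntMax n c₀ c₁ f x) ^ 2) →
      essSup (fun p : ℝ × EuclideanSpace ℝ (Fin n) => (‖E p.1 p.2‖₊ : ℝ≥0∞))
          ((volume.restrict (Ioi (0:ℝ))).prod volume) ≤ C * M := by
  set v1 := volume (Metric.ball (0 : EuclideanSpace ℝ (Fin n)) 1) with hv1
  set K := ENNReal.ofReal (2 * c₀^(n+1) * (1+2*c₀*c₁)^n) * v1 with hK
  refine ⟨K + 1, ?_, ?_⟩
  · exact ENNReal.add_ne_top.2
      ⟨ENNReal.mul_ne_top ofReal_ne_top measure_ball_lt_top.ne, one_ne_top⟩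
  · intro E hE M hM
    by_contra hcon
    push_neg at hcon
    obtain ⟨lam, h1, h2⟩ := exists_between hcon
    have hpos : ((volume.restrict (Ioi (0:ℝ))).prod volume)
        {p : ℝ × EuclideanSpace ℝ (Fin n) | lam < (‖E p.1 p.2‖₊ : ℝ≥0∞)} ≠ 0 := by
      intro h0
      have hae : (fun p : ℝ × EuclideanSpace ℝ (Fin n) => (‖E p.1 p.2‖₊ : ℝ≥0∞))
          ≤ᵐ[(volume.restrict (Ioi (0:ℝ))).prod volume] fun _ => lam := by
        rw [Filter.EventuallyLE, ae_iff]
        have hset : {p : ℝ × EuclideanSpace ℝ (Fin n) |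
            ¬ (‖E p.1 p.2‖₊ : ℝ≥0∞) ≤ lam}
            = {p : ℝ × EuclideanSpace ℝ (Fin n) | lam < (‖E p.1 p.2‖₊ : ℝ≥0∞)} := by
          ext p; simp [not_le]
        rw [hset]
        exact h0
      have hle := essSup_le_of_ae_le lam hae
      exact absurd (h2.trans_le hle) (lt_irrefl _)
    have hkey := key_lam n c₀ c₁ hc₀ hc₁ E hE M hM lam hpos
    have hKC : K * M^2 ≤ ((K+1)*M)^2 := by
      rw [mul_pow]
      refine mul_le_mul_left ?_ _
      calc K ≤ (K+1) * 1 := by rw [mul_one]; exact le_self_add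
        _ ≤ (K+1)*(K+1) := mul_le_mul_right le_add_self _
        _ = (K+1)^2 := (sq _).symm
    have hlt : ((K+1)*M)^2 < lam^2 := ENNReal.pow_lt_pow_left two_ne_zero h1
    exact absurd (hkey.trans (le_trans (le_of_eq (by rw [hK])) hKC)) (not_le.2 hlt)
end
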